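/- Unbiasedness of the un-centered influence function: with φ_a(Z) = 1(A=a)(Y - μ(X,a))/P(A=a|X) + μ(X,a) (on the event P(A=a|X)>0), γ(X) = μ(X,1) - μ(X,0), and φ(Z) = [δπ(X)φ₁(Z) + (1-π(X))φ₀(Z)]/(δπ(X)+1-π(X)) + δγ(X)(A - π(X))/(δπ(X)+1-π(X))², one has E[φ(Z)] = ψ(δ), where ψ(δ) = E[(δπ(X)μ(X,1)+(1-π(X))μ(X,0))/(δπ(X)+1-π(X))]. -/

import Mathlib

open MeasureTheory

lemma key_zero {Ω : Type*} [mΩ : MeasurableSpace Ω]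
    (P : Measure Ω) [IsProbabilityMeasure P]
    (m : MeasurableSpace Ω) (hm : m ≤ mΩ) (f g : Ω → ℝ)
    (hf : Integrable f P)
    (hf0 : ∀ s : Set Ω, MeasurableSet[m] s → ∫ ω in s, f ω ∂P = 0)
    (hg : StronglyMeasurable[m] g)
    (hint : Integrable (fun ω => g ω * f ω) P) :
    ∫ ω, g ω * f ω ∂P = 0 := by
  haveI : IsFiniteMeasure (P.trim hm) := isFiniteMeasure_trim hm
  have hcond : (fun _ : Ω => (0:ℝ)) =ᵐ[P] P[f|m] := by
    refine ae_eq_condExp_of_forall_setIntegral_eq hm hf ?_ ?_ ?_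
    · intro s hs _; exact integrableOn_zero (s := s) (μ := P)
    · intro s hs _; simp [hf0 s hs]
    · exact StronglyMeasurable.aestronglyMeasurable stronglyMeasurable_zero
  have hmul : P[g * f|m] =ᵐ[P] g * P[f|m] :=
    condExp_mul_of_stronglyMeasurable_left hg hint hf
  have h1 : ∫ ω, g ω * f ω ∂P = ∫ ω, (P[g * f|m]) ω ∂P :=
    (integral_condExp hm (f := g * f)).symm
  rw [h1, integral_congr_ae hmul, integral_congr_ae ?_, integral_zero]
  filter_upwards [hcond] with ω hω
  simp [Pi.mul_apply, ← hω]

set_option maxHeartbeats 1000000 in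
set_option maxHeartbeats 1000000

/-- Unbiasedness of the un-centered influence function: with
`φₐ(Z) = 1(A=a)(Y - μ(X,a))/P(A=a|X) + μ(X,a)`, `γ(X) = μ(X,1) - μ(X,0)` and
`φ(Z) = [δπ(X)φ₁(Z) + (1-π(X))φ₀(Z)]/(δπ(X)+1-π(X)) + δγ(X)(A-π(X))/(δπ(X)+1-π(X))²`,
one has `E[φ(Z)] = ψ(δ) = E[(δπ(X)μ(X,1)+(1-π(X))μ(X,0))/(δπ(X)+1-π(X))]`. -/
theorem influence_function_unbiased
    {Ω 𝒳 : Type*} [MeasurableSpace Ω] [MeasurableSpace 𝒳]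
    (P : Measure Ω) [IsProbabilityMeasure P]
    (X : Ω → 𝒳) (A Y : Ω → ℝ)
    (hX : Measurable X) (hA : Measurable A) (hY : Measurable Y)
    (hYint : Integrable Y P)
    (hAbin : ∀ ω, A ω = 0 ∨ A ω = 1)
    (δ : ℝ) (hδ : 0 < δ)
    -- π(x) = P(A = 1 | X = x), with π(X) ∈ (0,1) a.s.
    (π : 𝒳 → ℝ) (hπmeas : Measurable π)
    (hπ : ∀ S : Set 𝒳, MeasurableSet S →
      ∫ ω in X ⁻¹' S, A ω ∂P = ∫ ω in X ⁻¹' S, π (X ω) ∂P)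
    (hπ01 : ∀ᵐ ω ∂P, π (X ω) ∈ Set.Ioo (0 : ℝ) 1)
    -- μ(x,a) = E[Y | X = x, A = a]
    (μ1 μ0 : 𝒳 → ℝ) (hμ1meas : Measurable μ1) (hμ0meas : Measurable μ0)
    (hμ1int : Integrable (fun ω => μ1 (X ω)) P)
    (hμ0int : Integrable (fun ω => μ0 (X ω)) P)
    (hμ1 : ∀ S : Set 𝒳, MeasurableSet S →
      ∫ ω in X ⁻¹' S ∩ {ω | A ω = 1}, Y ω ∂P
        = ∫ ω in X ⁻¹' S ∩ {ω | A ω = 1}, μ1 (X ω) ∂P)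
    (hμ0 : ∀ S : Set 𝒳, MeasurableSet S →
      ∫ ω in X ⁻¹' S ∩ {ω | A ω = 0}, Y ω ∂P
        = ∫ ω in X ⁻¹' S ∩ {ω | A ω = 0}, μ0 (X ω) ∂P)
    -- the pieces φ₁, φ₀ and the full un-centered influence function φ
    (φ1 φ0 φ : Ω → ℝ)
    (hφ1 : ∀ ω, φ1 ω = (if A ω = 1 then (1 : ℝ) else 0) * (Y ω - μ1 (X ω)) / π (X ω)
        + μ1 (X ω))
    (hφ0 : ∀ ω, φ0 ω = (if A ω = 0 then (1 : ℝ) else 0) * (Y ω - μ0 (X ω)) / (1 - π (X ω))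
        + μ0 (X ω))
    (hφ : ∀ ω, φ ω = (δ * π (X ω) * φ1 ω + (1 - π (X ω)) * φ0 ω)
          / (δ * π (X ω) + 1 - π (X ω))
        + δ * (μ1 (X ω) - μ0 (X ω)) * (A ω - π (X ω))
          / (δ * π (X ω) + 1 - π (X ω)) ^ 2)
    (hφint : Integrable φ P) :
    ∫ ω, φ ω ∂P
      = ∫ ω, (δ * π (X ω) * μ1 (X ω) + (1 - π (X ω)) * μ0 (X ω))
              / (δ * π (X ω) + 1 - π (X ω)) ∂P := by
  -- notation
  set mδ : ℝ := min δ 1 with hmδ_def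
  have hmδ : 0 < mδ := lt_min hδ one_pos
  have hmδδ : mδ ≤ δ := min_le_left δ 1
  have hmδ1 : mδ ≤ 1 := min_le_right δ 1
  -- a.e. lower bound on the denominator
  have hden : ∀ᵐ ω ∂P, mδ ≤ δ * π (X ω) + 1 - π (X ω) := by
    filter_upwards [hπ01] with ω hp
    obtain ⟨h0, h1⟩ := hp
    nlinarith [mul_nonneg (sub_nonneg.2 hmδδ) h0.le,
      mul_nonneg (sub_nonneg.2 hmδ1) (sub_nonneg.2 h1.le)]
  -- the pieces
  set f1 : Ω → ℝ := fun ω => (if A ω = 1 then (1:ℝ) else 0) * (Y ω - μ1 (X ω)) with hf1_def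
  set f0 : Ω → ℝ := fun ω => (if A ω = 0 then (1:ℝ) else 0) * (Y ω - μ0 (X ω)) with hf0_def
  set f2 : Ω → ℝ := fun ω => A ω - π (X ω) with hf2_def
  set g1 : 𝒳 → ℝ := fun x => δ / (δ * π x + 1 - π x) with hg1_def
  set g0 : 𝒳 → ℝ := fun x => 1 / (δ * π x + 1 - π x) with hg0_def
  set g2 : 𝒳 → ℝ := fun x => δ * (μ1 x - μ0 x) / (δ * π x + 1 - π x) ^ 2 with hg2_def
  -- measurability of the g's
  have hg1m : Measurable g1 := by fun_prop
  have hg0m : Measurable g0 := by fun_prop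
  have hg2m : Measurable g2 := by fun_prop
  -- indicator sets
  have hsetA1 : MeasurableSet {ω | A ω = 1} := hA (measurableSet_singleton 1)
  have hsetA0 : MeasurableSet {ω | A ω = 0} := hA (measurableSet_singleton 0)
  have hf1eq : f1 = Set.indicator {ω | A ω = 1} (fun ω => Y ω - μ1 (X ω)) := by
    funext ω; by_cases h : A ω = 1 <;> simp [hf1_def, Set.indicator, h]
  have hf0eq : f0 = Set.indicator {ω | A ω = 0} (fun ω => Y ω - μ0 (X ω)) := by
    funext ω; by_cases h : A ω = 0 <;> simp [hf0_def, Set.indicator, h]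
  -- integrability of the f's
  have hYμ1 : Integrable (fun ω => Y ω - μ1 (X ω)) P := hYint.sub hμ1int
  have hYμ0 : Integrable (fun ω => Y ω - μ0 (X ω)) P := hYint.sub hμ0int
  have hf1int : Integrable f1 P := by rw [hf1eq]; exact hYμ1.indicator hsetA1
  have hf0int : Integrable f0 P := by rw [hf0eq]; exact hYμ0.indicator hsetA0
  have hAint : Integrable A P := by
    refine (integrable_const (1:ℝ)).mono' hA.aestronglyMeasurable ?_
    refine ae_of_all _ fun ω => ?_
    rcases hAbin ω with h | h <;> simp [h]
  have hπXint : Integrable (fun ω => π (X ω)) P := by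
    refine (integrable_const (1:ℝ)).mono' (hπmeas.comp hX).aestronglyMeasurable ?_
    filter_upwards [hπ01] with ω hp
    rw [Real.norm_eq_abs, abs_of_pos hp.1]
    exact hp.2.le
  have hf2int : Integrable f2 P := hAint.sub hπXint
  -- zero set-integral properties
  have hz1 : ∀ S : Set 𝒳, MeasurableSet S → ∫ ω in X ⁻¹' S, f1 ω ∂P = 0 := by
    intro S hS
    rw [hf1eq, setIntegral_indicator hsetA1,
      integral_sub (hYint.integrableOn) (hμ1int.integrableOn), sub_eq_zero]
    exact hμ1 S hS
  have hz0 : ∀ S : Set 𝒳, MeasurableSet S → ∫ ω in X ⁻¹' S, f0 ω ∂P = 0 := by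
    intro S hS
    rw [hf0eq, setIntegral_indicator hsetA0,
      integral_sub (hYint.integrableOn) (hμ0int.integrableOn), sub_eq_zero]
    exact hμ0 S hS
  have hz2 : ∀ S : Set 𝒳, MeasurableSet S → ∫ ω in X ⁻¹' S, f2 ω ∂P = 0 := by
    intro S hS
    rw [hf2_def, integral_sub (hAint.integrableOn) (hπXint.integrableOn), sub_eq_zero]
    exact hπ S hS
  -- bounds and integrability of products
  have hbd1 : ∀ᵐ ω ∂P, ‖g1 (X ω)‖ ≤ δ / mδ := by
    filter_upwards [hden] with ω hd
    have hdpos : 0 < δ * π (X ω) + 1 - π (X ω) := lt_of_lt_of_le hmδ hd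
    rw [hg1_def, Real.norm_eq_abs, abs_of_pos (by positivity)]
    rw [div_le_div_iff₀ hdpos hmδ]
    nlinarith
  have hbd0 : ∀ᵐ ω ∂P, ‖g0 (X ω)‖ ≤ 1 / mδ := by
    filter_upwards [hden] with ω hd
    have hdpos : 0 < δ * π (X ω) + 1 - π (X ω) := lt_of_lt_of_le hmδ hd
    rw [hg0_def, Real.norm_eq_abs, abs_of_pos (by positivity)]
    rw [div_le_div_iff₀ hdpos hmδ]
    nlinarith
  have hint1 : Integrable (fun ω => g1 (X ω) * f1 ω) P :=
    hf1int.bdd_mul ((hg1m.comp hX).aestronglyMeasurable) hbd1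
  have hint0 : Integrable (fun ω => g0 (X ω) * f0 ω) P :=
    hf0int.bdd_mul ((hg0m.comp hX).aestronglyMeasurable) hbd0
  have hint2 : Integrable (fun ω => g2 (X ω) * f2 ω) P := by
    refine ((hμ1int.abs.add hμ0int.abs).const_mul (δ / mδ ^ 2)).mono'
      (((hg2m.comp hX).mul (hA.sub (hπmeas.comp hX))).aestronglyMeasurable) ?_
    filter_upwards [hden, hπ01] with ω hd hp
    have hdpos : 0 < δ * π (X ω) + 1 - π (X ω) := lt_of_lt_of_le hmδ hd
    have hf2bd : |f2 ω| ≤ 1 := by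
      rw [hf2_def, abs_le]
      rcases hAbin ω with h | h <;> constructor <;> simp [h] <;> linarith [hp.1, hp.2]
    have hg2bd : |g2 (X ω)| ≤ δ / mδ ^ 2 * (|μ1 (X ω)| + |μ0 (X ω)|) := by
      rw [hg2_def]
      simp only []
      rw [abs_div, abs_of_pos (by positivity : (0:ℝ) < (δ * π (X ω) + 1 - π (X ω)) ^ 2),
        div_le_iff₀ (by positivity)]
      have habs : |δ * (μ1 (X ω) - μ0 (X ω))| ≤ δ * (|μ1 (X ω)| + |μ0 (X ω)|) := by
        rw [abs_mul, abs_of_pos hδ]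
        exact mul_le_mul_of_nonneg_left (abs_sub _ _) hδ.le
      have hsq : mδ ^ 2 ≤ (δ * π (X ω) + 1 - π (X ω)) ^ 2 := by nlinarith
      have hnn : 0 ≤ |μ1 (X ω)| + |μ0 (X ω)| := by positivity
      calc |δ * (μ1 (X ω) - μ0 (X ω))| ≤ δ * (|μ1 (X ω)| + |μ0 (X ω)|) := habs
        _ = δ / mδ ^ 2 * (|μ1 (X ω)| + |μ0 (X ω)|) * mδ ^ 2 := by field_simp
        _ ≤ δ / mδ ^ 2 * (|μ1 (X ω)| + |μ0 (X ω)|) * (δ * π (X ω) + 1 - π (X ω)) ^ 2 := by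
            refine mul_le_mul_of_nonneg_left hsq (by positivity)
    rw [Real.norm_eq_abs, abs_mul]
    calc |g2 (X ω)| * |f2 ω| ≤ (δ / mδ ^ 2 * (|μ1 (X ω)| + |μ0 (X ω)|)) * 1 :=
          mul_le_mul hg2bd hf2bd (abs_nonneg _) (by positivity)
      _ = δ / mδ ^ 2 * (|μ1 (X ω)| + |μ0 (X ω)|) := by ring
  -- the target function is integrable
  have htgtint : Integrable (fun ω => (δ * π (X ω) * μ1 (X ω) + (1 - π (X ω)) * μ0 (X ω))
      / (δ * π (X ω) + 1 - π (X ω))) P := by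
    refine (hμ1int.abs.add hμ0int.abs).mono'
      ((by fun_prop : Measurable (fun ω => (δ * π (X ω) * μ1 (X ω)
        + (1 - π (X ω)) * μ0 (X ω)) / (δ * π (X ω) + 1 - π (X ω)))).aestronglyMeasurable) ?_
    filter_upwards [hden, hπ01] with ω hd hp
    have hdpos : 0 < δ * π (X ω) + 1 - π (X ω) := lt_of_lt_of_le hmδ hd
    rw [Real.norm_eq_abs, abs_div, abs_of_pos hdpos, div_le_iff₀ hdpos]
    have e1 : |δ * π (X ω) * μ1 (X ω)| = δ * π (X ω) * |μ1 (X ω)| := by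
      rw [abs_mul, abs_of_pos (show (0:ℝ) < δ * π (X ω) by nlinarith [hp.1])]
    have e0 : |(1 - π (X ω)) * μ0 (X ω)| = (1 - π (X ω)) * |μ0 (X ω)| := by
      rw [abs_mul, abs_of_pos (show (0:ℝ) < 1 - π (X ω) by linarith [hp.2])]
    have h1 : |δ * π (X ω) * μ1 (X ω) + (1 - π (X ω)) * μ0 (X ω)|
        ≤ δ * π (X ω) * |μ1 (X ω)| + (1 - π (X ω)) * |μ0 (X ω)| := by
      refine (abs_add_le _ _).trans ?_
      rw [e1, e0]
    simp only [Pi.add_apply]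
    nlinarith [abs_nonneg (μ1 (X ω)), abs_nonneg (μ0 (X ω)), hp.1, hp.2,
      mul_nonneg (mul_nonneg hδ.le hp.1.le) (abs_nonneg (μ0 (X ω))),
      mul_nonneg (sub_nonneg.2 hp.2.le) (abs_nonneg (μ1 (X ω)))]
  -- a.e. decomposition of φ
  have hdecomp : φ =ᵐ[P] fun ω =>
      (δ * π (X ω) * μ1 (X ω) + (1 - π (X ω)) * μ0 (X ω)) / (δ * π (X ω) + 1 - π (X ω))
      + g1 (X ω) * f1 ω + g0 (X ω) * f0 ω + g2 (X ω) * f2 ω := by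
    filter_upwards [hπ01] with ω hp
    obtain ⟨hp0, hp1⟩ := hp
    have hpne : π (X ω) ≠ 0 := ne_of_gt hp0
    have h1pne : (1:ℝ) - π (X ω) ≠ 0 := ne_of_gt (by linarith)
    have hdne : δ * π (X ω) + 1 - π (X ω) ≠ 0 := ne_of_gt (by nlinarith)
    rw [hφ ω, hφ1 ω, hφ0 ω]
    simp only [hg1_def, hg0_def, hg2_def, hf1_def, hf0_def, hf2_def]
    set p := π (X ω) with hp_def
    set m1 := μ1 (X ω)
    set m0 := μ0 (X ω)
    set y := Y ω
    set a := A ω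
    set i1 : ℝ := if A ω = 1 then 1 else 0
    set i0 : ℝ := if A ω = 0 then 1 else 0
    field_simp
    ring
  -- conclusion via the key lemma
  have hm : MeasurableSpace.comap X inferInstance ≤ ‹MeasurableSpace Ω› := hX.comap_le
  have hXm : Measurable[MeasurableSpace.comap X inferInstance] X := fun _ hS => ⟨_, hS, rfl⟩
  have mkz : ∀ (f : Ω → ℝ) (g : 𝒳 → ℝ), Measurable g → Integrable f P →
      (∀ S : Set 𝒳, MeasurableSet S → ∫ ω in X ⁻¹' S, f ω ∂P = 0) →
      Integrable (fun ω => g (X ω) * f ω) P → ∫ ω, g (X ω) * f ω ∂P = 0 := by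
    intro f g hg hf hf0 hint
    refine key_zero P _ hm f (fun ω => g (X ω)) hf ?_ ((hg.comp hXm).stronglyMeasurable) hint
    rintro s ⟨S, hS, rfl⟩
    exact hf0 S hS
  have z1 := mkz f1 g1 hg1m hf1int hz1 hint1
  have z0 := mkz f0 g0 hg0m hf0int hz0 hint0
  have z2 := mkz f2 g2 hg2m hf2int hz2 hint2
  rw [integral_congr_ae hdecomp]
  have i2 : Integrable (fun ω => (δ * π (X ω) * μ1 (X ω) + (1 - π (X ω)) * μ0 (X ω))
      / (δ * π (X ω) + 1 - π (X ω)) + g1 (X ω) * f1 ω) P := htgtint.add hint1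
  have i3 : Integrable (fun ω => (δ * π (X ω) * μ1 (X ω) + (1 - π (X ω)) * μ0 (X ω))
      / (δ * π (X ω) + 1 - π (X ω)) + g1 (X ω) * f1 ω + g0 (X ω) * f0 ω) P := i2.add hint0
  rw [integral_add i3 hint2, integral_add i2 hint0, integral_add htgtint hint1,
    z1, z0, z2]
  ring
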